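/- Let N ≥ 3 be an integer, x₀ ∈ ℝ^N, R₀ > 0 and G ≥ 0. Then there exist r₀ > R₀ and α > 0, depending only on N, R₀ and G, with the following property: for every r ≥ r₀, if u is continuous on the closed annulus {x ∈ ℝ^N : R₀ ≤ ‖x − x₀‖ ≤ r}, harmonic on the open annulus {x : R₀ < ‖x − x₀‖ < r}, satisfies u ≥ 0 on the closed annulus, u ≤ G on the inner sphere {x : ‖x − x₀‖ = R₀}, and u = 0 on the outer sphere {x : ‖x − x₀‖ = r}, then at every point x with ‖x − x₀‖ = r at which u is differentiable along the closed annulus, every such derivative p ∈ ℝ^N satisfies ‖p‖² ≤ α r^{2−2N}. -/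

import Mathlib

open Metric Set

/-- The Laplacian of `f : ℝ^N → ℝ` at `x`, as the sum of the second partial
derivatives along the coordinate directions. -/
noncomputable def lapl {N : ℕ} (f : EuclideanSpace ℝ (Fin N) → ℝ)
    (x : EuclideanSpace ℝ (Fin N)) : ℝ :=
  ∑ i : Fin N,
    fderiv ℝ (fun y => fderiv ℝ f y (EuclideanSpace.single i 1)) x (EuclideanSpace.single i 1)

/-- `f` is harmonic on `Ω`: it is `C²` there and its Laplacian vanishes on `Ω`. -/
def IsHarmonicOn {N : ℕ} (f : EuclideanSpace ℝ (Fin N) → ℝ)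
    (Ω : Set (EuclideanSpace ℝ (Fin N))) : Prop :=
  ContDiffOn ℝ 2 f Ω ∧ ∀ x ∈ Ω, lapl f x = 0

open Filter Topology RealInnerProductSpace

noncomputable section
set_option maxHeartbeats 1000000
namespace HS

abbrev E (N : ℕ) := EuclideanSpace ℝ (Fin N)
variable {N : ℕ}

def ee (i : Fin N) : E N := EuclideanSpace.single i 1

def q (x₀ : E N) : E N → ℝ := fun y => ‖y - x₀‖ ^ 2

lemma hasFDerivAt_q (x₀ x : E N) :
    HasFDerivAt (q x₀) (2 • (innerSL ℝ (x - x₀))) x := by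
  have h : HasFDerivAt (fun y : E N => y - x₀) (ContinuousLinearMap.id ℝ (E N)) x :=
    (hasFDerivAt_id x).sub_const x₀
  exact h.norm_sq.congr_fderiv (by ext v; simp)

lemma q_nonneg (x₀ x : E N) : 0 ≤ q x₀ x := sq_nonneg _

lemma q_pos (x₀ x : E N) (h : x ≠ x₀) : 0 < q x₀ x := by
  have : x - x₀ ≠ 0 := sub_ne_zero.2 h
  simpa [q] using pow_pos (norm_pos_iff.2 this) 2

lemma innerSL_apply_ee (x₀ x : E N) (i : Fin N) :
    (innerSL ℝ (x - x₀)) (ee i) = x i - x₀ i := by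
  simp [ee, real_inner_comm, EuclideanSpace.inner_single_right]

lemma q_eq_sum (x₀ x : E N) : q x₀ x = ∑ i, (x i - x₀ i) ^ 2 := by
  have h : ‖x - x₀‖ = Real.sqrt (∑ i, ‖(x - x₀) i‖ ^ 2) := EuclideanSpace.norm_eq _
  have h2 : ∀ i, ‖(x - x₀) i‖ ^ 2 = (x i - x₀ i) ^ 2 := by
    intro i; rw [Real.norm_eq_abs, sq_abs]; simp
  rw [q, h, Real.sq_sqrt (by positivity)]
  exact Finset.sum_congr rfl fun i _ => h2 i

/-- the barrier-type function `a * (q y)^β + b * q y + d`. -/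
def psi (x₀ : E N) (a b d β : ℝ) : E N → ℝ :=
  fun y => a * (q x₀ y) ^ β + b * q x₀ y + d

lemma hasFDerivAt_psi (x₀ : E N) (a b d β : ℝ) {x : E N} (hx : x ≠ x₀) :
    HasFDerivAt (psi x₀ a b d β)
      ((2 * (a * β * (q x₀ x) ^ (β - 1) + b)) • innerSL ℝ (x - x₀)) x := by
  have hq : 0 < q x₀ x := q_pos x₀ x hx
  have h1 : HasDerivAt (fun t : ℝ => t ^ β) (β * (q x₀ x) ^ (β - 1)) (q x₀ x) :=
    Real.hasDerivAt_rpow_const (Or.inl hq.ne')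
  have h2 : HasFDerivAt (fun y => (q x₀ y) ^ β)
      ((β * (q x₀ x) ^ (β - 1)) • (2 • (innerSL ℝ (x - x₀)))) x :=
    h1.comp_hasFDerivAt x (hasFDerivAt_q x₀ x)
  have h3 := ((h2.const_mul a).add ((hasFDerivAt_q x₀ x).const_mul b)).add_const d
  refine h3.congr_fderiv ?_
  ext v
  simp [smul_smul]
  ring

def P (x₀ : E N) (a b β : ℝ) (i : Fin N) : E N → ℝ :=
  fun y => 2 * (a * β * (q x₀ y) ^ (β - 1) + b) * (y i - x₀ i)

lemma fderiv_psi_ee (x₀ : E N) (a b d β : ℝ) {x : E N} (hx : x ≠ x₀) (i : Fin N) :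
    fderiv ℝ (psi x₀ a b d β) x (ee i) = P x₀ a b β i x := by
  rw [(hasFDerivAt_psi x₀ a b d β hx).fderiv]
  rw [ContinuousLinearMap.smul_apply, innerSL_apply_ee]
  simp [P]

lemma hasFDerivAt_P (x₀ : E N) (a b β : ℝ) (i : Fin N) {x : E N} (hx : x ≠ x₀) :
    HasFDerivAt (P x₀ a b β i)
      ((2 * (a * β * (q x₀ x) ^ (β - 1) + b)) • (EuclideanSpace.proj i (𝕜 := ℝ))
        + (x i - x₀ i) • ((4 * a * β * (β - 1) * (q x₀ x) ^ (β - 1 - 1)) •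
            innerSL ℝ (x - x₀))) x := by
  have hq : 0 < q x₀ x := q_pos x₀ x hx
  have h1 : HasDerivAt (fun t : ℝ => t ^ (β - 1)) ((β - 1) * (q x₀ x) ^ (β - 1 - 1)) (q x₀ x) :=
    Real.hasDerivAt_rpow_const (Or.inl hq.ne')
  have h2 : HasFDerivAt (fun y => (q x₀ y) ^ (β - 1))
      (((β - 1) * (q x₀ x) ^ (β - 1 - 1)) • (2 • (innerSL ℝ (x - x₀)))) x :=
    h1.comp_hasFDerivAt x (hasFDerivAt_q x₀ x)
  have hg1 : HasFDerivAt (fun y => 2 * (a * β * (q x₀ y) ^ (β - 1) + b))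
      ((4 * a * β * (β - 1) * (q x₀ x) ^ (β - 1 - 1)) • innerSL ℝ (x - x₀)) x := by
    have h3 := (((h2.const_mul (a * β)).add_const b).const_mul 2)
    refine h3.congr_fderiv ?_
    ext v
    simp only [ContinuousLinearMap.smul_apply, smul_eq_mul, nsmul_eq_mul, Nat.cast_ofNat]
    ring
  have hg2 : HasFDerivAt (fun y : E N => y i - x₀ i)
      (EuclideanSpace.proj i (𝕜 := ℝ)) x := by
    have := ((EuclideanSpace.proj i (𝕜 := ℝ)).hasFDerivAt (x := x)).sub_const (x₀ i)
    simpa using this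
  exact hg1.mul hg2

lemma fderiv_P_ee (x₀ : E N) (a b β : ℝ) (i : Fin N) {x : E N} (hx : x ≠ x₀) :
    fderiv ℝ (P x₀ a b β i) x (ee i) =
      2 * (a * β * (q x₀ x) ^ (β - 1) + b)
        + 4 * a * β * (β - 1) * (q x₀ x) ^ (β - 1 - 1) * (x i - x₀ i) ^ 2 := by
  rw [(hasFDerivAt_P x₀ a b β i hx).fderiv]
  have h1 : (EuclideanSpace.proj i (𝕜 := ℝ)) (ee i) = 1 := by simp [ee]
  rw [ContinuousLinearMap.add_apply, ContinuousLinearMap.smul_apply,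
    ContinuousLinearMap.smul_apply, ContinuousLinearMap.smul_apply, innerSL_apply_ee, h1]
  simp only [smul_eq_mul]
  ring

lemma lapl_eq (f : E N → ℝ) (x : E N) :
    lapl f x = ∑ i, fderiv ℝ (fun y => fderiv ℝ f y (ee i)) x (ee i) := rfl

/-- a convenient notion of (pointwise) twice differentiability. -/
def C2At (f : E N → ℝ) (x : E N) : Prop :=
  (∀ᶠ y in 𝓝 x, DifferentiableAt ℝ f y) ∧
    ∀ i : Fin N, DifferentiableAt ℝ (fun y => fderiv ℝ f y (ee i)) x

lemma C2At.add {f g : E N → ℝ} {x : E N} (hf : C2At f x) (hg : C2At g x) :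
    C2At (fun y => f y + g y) x ∧
      lapl (fun y => f y + g y) x = lapl f x + lapl g x := by
  have hev : ∀ i : Fin N, (fun y => fderiv ℝ (fun z => f z + g z) y (ee i)) =ᶠ[𝓝 x]
      (fun y => fderiv ℝ f y (ee i) + fderiv ℝ g y (ee i)) := by
    intro i
    filter_upwards [hf.1, hg.1] with y hfy hgy
    rw [fderiv_fun_add hfy hgy]; rfl
  constructor
  · constructor
    · filter_upwards [hf.1, hg.1] with y hfy hgy using hfy.add hgy
    · intro i
      exact (((hf.2 i).add (hg.2 i)).congr_of_eventuallyEq (hev i))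
  · rw [lapl_eq, lapl_eq, lapl_eq, ← Finset.sum_add_distrib]
    refine Finset.sum_congr rfl fun i _ => ?_
    rw [(hev i).fderiv_eq, fderiv_fun_add (hf.2 i) (hg.2 i)]; rfl

lemma C2At_psi (x₀ : E N) (a b d β : ℝ) {x : E N} (hx : x ≠ x₀) :
    C2At (psi x₀ a b d β) x := by
  have hopen : IsOpen {y : E N | y ≠ x₀} := isOpen_ne
  have hmem : {y : E N | y ≠ x₀} ∈ 𝓝 x := hopen.mem_nhds hx
  constructor
  · filter_upwards [hmem] with y hy using (hasFDerivAt_psi x₀ a b d β hy).differentiableAt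
  · intro i
    have hev : (fun y => fderiv ℝ (psi x₀ a b d β) y (ee i)) =ᶠ[𝓝 x] P x₀ a b β i := by
      filter_upwards [hmem] with y hy using fderiv_psi_ee x₀ a b d β hy i
    exact ((hasFDerivAt_P x₀ a b β i hx).differentiableAt).congr_of_eventuallyEq hev

lemma lapl_psi (x₀ : E N) (a b d β : ℝ) {x : E N} (hx : x ≠ x₀) :
    lapl (psi x₀ a b d β) x =
      2 * N * (a * β * (q x₀ x) ^ (β - 1) + b)
        + 4 * a * β * (β - 1) * (q x₀ x) ^ (β - 1 - 1) * q x₀ x := by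
  have hopen : IsOpen {y : E N | y ≠ x₀} := isOpen_ne
  have hmem : {y : E N | y ≠ x₀} ∈ 𝓝 x := hopen.mem_nhds hx
  rw [lapl_eq]
  have hterm : ∀ i : Fin N, fderiv ℝ (fun y => fderiv ℝ (psi x₀ a b d β) y (ee i)) x (ee i)
      = 2 * (a * β * (q x₀ x) ^ (β - 1) + b)
        + 4 * a * β * (β - 1) * (q x₀ x) ^ (β - 1 - 1) * (x i - x₀ i) ^ 2 := by
    intro i
    have hev : (fun y => fderiv ℝ (psi x₀ a b d β) y (ee i)) =ᶠ[𝓝 x] P x₀ a b β i := by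
      filter_upwards [hmem] with y hy using fderiv_psi_ee x₀ a b d β hy i
    rw [hev.fderiv_eq, fderiv_P_ee x₀ a b β i hx]
  rw [Finset.sum_congr rfl fun i _ => hterm i, Finset.sum_add_distrib,
    Finset.sum_const, ← Finset.mul_sum, ← q_eq_sum]
  simp [Finset.card_univ]
  ring

/-- Laplacian of the barrier with the right exponent. -/
lemma lapl_psi_special (x₀ : E N) (a b d : ℝ) {x : E N} (hx : x ≠ x₀) (hN : 3 ≤ N) :
    lapl (psi x₀ a b d ((2 - N) / 2)) x = 2 * N * b := by
  set β : ℝ := (2 - N) / 2 with hβ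
  have hq : 0 < q x₀ x := q_pos x₀ x hx
  have hrw : (q x₀ x) ^ (β - 1 - 1) * q x₀ x = (q x₀ x) ^ (β - 1) := by
    rw [← Real.rpow_add_one hq.ne']
    ring_nf
  rw [lapl_psi x₀ a b d β hx]
  rw [mul_assoc (4 * a * β * (β - 1)), hrw]
  have : 2 * (N:ℝ) * (a * β * (q x₀ x) ^ (β - 1)) + 4 * a * β * (β - 1) * (q x₀ x) ^ (β - 1)
      = 2 * a * β * (2 * β - 2 + N) * (q x₀ x) ^ (β - 1) := by ring
  have hzero : 2 * β - 2 + N = 0 := by rw [hβ]; ring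
  linear_combination this + (2 * a * β * (q x₀ x) ^ (β - 1)) * hzero

lemma C2At_of_contDiffOn {A : Set (E N)} (hA : IsOpen A) {f : E N → ℝ}
    (hf : ContDiffOn ℝ 2 f A) {x : E N} (hx : x ∈ A) : C2At f x := by
  constructor
  · filter_upwards [hA.mem_nhds hx] with y hy
    exact ((hf.differentiableOn (by norm_num)) y hy).differentiableAt (hA.mem_nhds hy)
  · intro i
    have h1 : ContDiffAt ℝ 2 f x := hf.contDiffAt (hA.mem_nhds hx)
    have h2 : ContDiffAt ℝ 1 (fderiv ℝ f) x := by
      apply h1.fderiv_right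
      norm_num
    have h3 : DifferentiableAt ℝ (fderiv ℝ f) x := h2.differentiableAt one_ne_zero
    exact h3.clm_apply (differentiableAt_const _)

/-- the second derivative test: at an interior local max, each pure second partial is ≤ 0. -/
lemma secondDeriv_nonpos {f : E N → ℝ} {x : E N} (hmax : IsLocalMax f x)
    (hf : C2At f x) (i : Fin N) :
    fderiv ℝ (fun y => fderiv ℝ f y (ee i)) x (ee i) ≤ 0 := by
  by_contra hc
  push_neg at hc
  set e : E N := ee i with he
  set F : E N → ℝ := fun y => fderiv ℝ f y e with hF
  set c : ℝ := fderiv ℝ F x e with hcdef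
  set γ : ℝ → E N := fun t => x + t • e with hγdef
  have hγ : ∀ t : ℝ, HasDerivAt γ e t := by
    intro t
    have := ((hasDerivAt_id t).smul_const e).const_add x
    simpa [hγdef] using this
  have hγ0 : γ 0 = x := by simp [hγdef]
  have hγcont : Continuous γ := by
    have : ∀ t, ContinuousAt γ t := fun t => (hγ t).continuousAt
    exact continuous_iff_continuousAt.2 this
  -- G = F ∘ γ
  have hG : HasDerivAt (fun t => F (γ t)) c 0 := by
    have h0 : HasFDerivAt F (fderiv ℝ F x) (γ 0) := hγ0 ▸ (hf.2 i).hasFDerivAt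
    exact h0.comp_hasDerivAt 0 (hγ 0)
  have hG0 : F (γ 0) = 0 := by
    rw [hγ0, hF]
    simp [hmax.fderiv_eq_zero]
  -- slope of G tends to c > 0
  have hslope : Tendsto (slope (fun t => F (γ t)) 0) (𝓝[≠] 0) (𝓝 c) :=
    hasDerivAt_iff_tendsto_slope.1 hG
  have hev1 : ∀ᶠ t in 𝓝[>] (0:ℝ), 0 < slope (fun t => F (γ t)) 0 t := by
    have : ∀ᶠ t in 𝓝[≠] (0:ℝ), 0 < slope (fun t => F (γ t)) 0 t :=
      hslope.eventually (eventually_gt_nhds hc)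
    exact this.filter_mono (nhdsWithin_mono 0 (fun t ht => ne_of_gt ht))
  have hev2 : ∀ᶠ t in 𝓝 (0:ℝ), DifferentiableAt ℝ f (γ t) := by
    have := hγcont.continuousAt (x := (0:ℝ))
    rw [ContinuousAt, hγ0] at this
    exact this.eventually hf.1
  have hev3 : ∀ᶠ t in 𝓝 (0:ℝ), f (γ t) ≤ f x := by
    have := hγcont.continuousAt (x := (0:ℝ))
    rw [ContinuousAt, hγ0] at this
    exact this.eventually hmax
  have hev23 : ∀ᶠ t in 𝓝[>] (0:ℝ), (∀ s ∈ Icc 0 t, DifferentiableAt ℝ f (γ s)) ∧ f (γ t) ≤ f x := by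
    obtain ⟨δ, hδpos, hδ⟩ := Metric.eventually_nhds_iff.1 (hev2.and hev3)
    rw [eventually_nhdsWithin_iff]
    filter_upwards [Metric.eventually_nhds_iff.2 ⟨δ, hδpos, fun _ h => h⟩] with t ht htpos
    have ht' : dist t 0 < δ := ht
    constructor
    · intro s hs
      have : dist s 0 < δ := by
        rw [Real.dist_eq, sub_zero] at ht' ⊢
        rw [abs_of_nonneg hs.1]
        calc s ≤ t := hs.2
          _ ≤ |t| := le_abs_self t
          _ < δ := ht'
      exact (hδ this).1
    · exact (hδ ht').2
  obtain ⟨δ, hδmem, hδ⟩ := mem_nhdsGT_iff_exists_Ioc_subset.1 (hev1.and hev23)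
  rw [mem_Ioi] at hδmem
  have hδself := hδ (by exact ⟨hδmem, le_rfl⟩ : δ ∈ Ioc 0 δ)
  have hdiff₁ : ∀ s ∈ Icc 0 δ, DifferentiableAt ℝ f (γ s) := hδself.2.1
  have hle₁ : f (γ δ) ≤ f x := hδself.2.2
  have hGpos : ∀ s ∈ Ioc 0 δ, 0 < F (γ s) := by
    intro s hs
    have h1 := (hδ hs).1
    rw [slope_def_field] at h1
    have hs0 : (0:ℝ) < s := hs.1
    have : F (γ s) = (F (γ s) - F (γ 0)) / (s - 0) * s := by
      rw [hG0, sub_zero, sub_zero, div_mul_cancel₀ _ hs0.ne']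
    rw [this]
    exact mul_pos (by simpa [div_eq_div_iff] using h1 ) hs0
  set g : ℝ → ℝ := fun t => f (γ t) with hgdef
  have hcont : ContinuousOn g (Icc 0 δ) := by
    intro s hs
    exact (((hdiff₁ s hs).continuousAt).comp (hγcont.continuousAt)).continuousWithinAt
  have hderiv : ∀ s ∈ interior (Icc (0:ℝ) δ), 0 < deriv g s := by
    intro s hs
    rw [interior_Icc] at hs
    have hd : HasDerivAt g (F (γ s)) s :=
      ((hdiff₁ s ⟨le_of_lt hs.1, le_of_lt hs.2⟩).hasFDerivAt).comp_hasDerivAt s (hγ s)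
    rw [hd.deriv]
    exact hGpos s ⟨hs.1, le_of_lt hs.2⟩
  have hmono := strictMonoOn_of_deriv_pos (convex_Icc 0 δ) hcont hderiv
  have : g 0 < g δ := hmono ⟨le_rfl, le_of_lt hδmem⟩ ⟨le_of_lt hδmem, le_rfl⟩ hδmem
  rw [hgdef] at this
  simp only [hγ0] at this
  exact absurd hle₁ (not_le.2 this)

/-- Maximum principle for strictly subharmonic functions on bounded open sets. -/
lemma maxPrinciple {A : Set (E N)} (hA : IsOpen A) (hcpt : IsCompact (closure A))
    {f : E N → ℝ} (hfc : ContinuousOn f (closure A))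
    (hf : ∀ z ∈ A, C2At f z ∧ 0 < lapl f z) {x : E N} (hx : x ∈ closure A) :
    ∃ y ∈ closure A \ A, f x ≤ f y := by
  obtain ⟨z, hz, hmax⟩ := hcpt.exists_isMaxOn ⟨x, hx⟩ hfc
  by_cases hzA : z ∈ A
  · exfalso
    have hlm : IsLocalMax f z := by
      filter_upwards [hA.mem_nhds hzA] with y hy using hmax (subset_closure hy)
    have h1 : lapl f z ≤ 0 := by
      rw [lapl_eq]
      exact Finset.sum_nonpos fun i _ => secondDeriv_nonpos hlm (hf z hzA).1 i
    exact absurd (hf z hzA).2 (not_lt.2 h1)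
  · exact ⟨z, ⟨hz, hzA⟩, hmax hx⟩

section annulus
variable (x₀ : E N) (R₀ r : ℝ)

def Aset : Set (E N) := {x | R₀ < ‖x - x₀‖ ∧ ‖x - x₀‖ < r}
def Sset : Set (E N) := {x | R₀ ≤ ‖x - x₀‖ ∧ ‖x - x₀‖ ≤ r}

lemma isOpen_Aset : IsOpen (Aset x₀ R₀ r) := by
  have hc : Continuous fun x : E N => ‖x - x₀‖ := (continuous_id.sub continuous_const).norm
  have : Aset x₀ R₀ r = (fun x : E N => ‖x - x₀‖) ⁻¹' (Ioo R₀ r) := rfl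
  rw [this]
  exact isOpen_Ioo.preimage hc

lemma isClosed_Sset : IsClosed (Sset x₀ R₀ r) := by
  have hc : Continuous fun x : E N => ‖x - x₀‖ := (continuous_id.sub continuous_const).norm
  have : Sset x₀ R₀ r = (fun x : E N => ‖x - x₀‖) ⁻¹' (Icc R₀ r) := rfl
  rw [this]
  exact isClosed_Icc.preimage hc

lemma Aset_subset_Sset : Aset x₀ R₀ r ⊆ Sset x₀ R₀ r :=
  fun x hx => ⟨le_of_lt hx.1, le_of_lt hx.2⟩

lemma closure_Aset_subset : closure (Aset x₀ R₀ r) ⊆ Sset x₀ R₀ r :=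
  closure_minimal (Aset_subset_Sset x₀ R₀ r) (isClosed_Sset x₀ R₀ r)

lemma isCompact_closure_Aset : IsCompact (closure (Aset x₀ R₀ r)) := by
  apply Bornology.IsBounded.isCompact_closure
  apply Bornology.IsBounded.subset (Metric.isBounded_closedBall (x := x₀) (r := r))
  intro x hx
  rw [Metric.mem_closedBall, dist_eq_norm]
  exact hx.2.le

lemma ne_x₀_of_mem_Sset (hR₀ : 0 < R₀) {x : E N} (hx : x ∈ Sset x₀ R₀ r) : x ≠ x₀ := by
  intro h
  have := hx.1
  rw [h] at this
  simp at this
  linarith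

lemma frontier_cases {z : E N} (hz : z ∈ closure (Aset x₀ R₀ r) \ Aset x₀ R₀ r) :
    (z ∈ Sset x₀ R₀ r) ∧ (‖z - x₀‖ = R₀ ∨ ‖z - x₀‖ = r) := by
  have h1 : z ∈ Sset x₀ R₀ r := closure_Aset_subset x₀ R₀ r hz.1
  refine ⟨h1, ?_⟩
  have h2 := hz.2
  simp only [Aset, mem_setOf_eq, not_and, not_lt] at h2
  rcases lt_or_eq_of_le h1.1 with h | h
  · exact Or.inr (le_antisymm h1.2 (h2 h))
  · exact Or.inl h.symm

/-- The comparison principle: `u` is dominated by the barrier on the annulus. -/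
lemma comparison (hN : 3 ≤ N) (hR₀ : 0 < R₀) (hRr : R₀ < r) {u : E N → ℝ} {G : ℝ}
    (hG : 0 ≤ G)
    (hcont : ContinuousOn u (Sset x₀ R₀ r))
    (hharm : IsHarmonicOn u (Aset x₀ R₀ r))
    (hbin : ∀ x, ‖x - x₀‖ = R₀ → u x ≤ G)
    (hbout : ∀ x, ‖x - x₀‖ = r → u x = 0)
    {c : ℝ} (hc : c * ((R₀ ^ 2) ^ ((2 - (N:ℝ)) / 2) - (r ^ 2) ^ ((2 - (N:ℝ)) / 2)) = G)
    (hcpos : 0 ≤ c) :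
    ∀ y ∈ Aset x₀ R₀ r, u y ≤
      c * ((q x₀ y) ^ ((2 - (N:ℝ)) / 2) - (r ^ 2) ^ ((2 - (N:ℝ)) / 2)) := by
  intro y hy
  set β : ℝ := (2 - (N:ℝ)) / 2 with hβ
  set A := Aset x₀ R₀ r
  have hA : IsOpen A := isOpen_Aset x₀ R₀ r
  have hrpos : 0 < r := lt_trans hR₀ hRr
  -- reduce to the ε-perturbed estimate
  have key : ∀ ε : ℝ, 0 < ε → u y ≤ c * ((q x₀ y) ^ β - (r ^ 2) ^ β) + ε * r ^ 2 := by
    intro ε hε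
    set w : E N → ℝ := psi x₀ (-c) ε (c * (r ^ 2) ^ β) β with hw
    set f : E N → ℝ := fun z => u z + w z with hf
    have hfA : ∀ z ∈ A, C2At f z ∧ 0 < lapl f z := by
      intro z hz
      have hzne : z ≠ x₀ := ne_x₀_of_mem_Sset x₀ R₀ r hR₀ (Aset_subset_Sset x₀ R₀ r hz)
      have h1 : C2At u z := C2At_of_contDiffOn hA hharm.1 hz
      have h2 : C2At w z := C2At_psi x₀ (-c) ε (c * (r ^ 2) ^ β) β hzne
      obtain ⟨h3, h4⟩ := h1.add h2
      refine ⟨h3, ?_⟩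
      rw [h4, hharm.2 z hz, lapl_psi_special x₀ (-c) ε (c * (r ^ 2) ^ β) hzne hN]
      have hN0 : (0:ℝ) < N := by positivity
      positivity
    have hfc : ContinuousOn f (closure A) := by
      apply ContinuousOn.add
      · exact hcont.mono (closure_Aset_subset x₀ R₀ r)
      · intro z hz
        have hzne : z ≠ x₀ :=
          ne_x₀_of_mem_Sset x₀ R₀ r hR₀ (closure_Aset_subset x₀ R₀ r hz)
        exact ((hasFDerivAt_psi x₀ (-c) ε (c * (r ^ 2) ^ β) β
          hzne).differentiableAt.continuousAt).continuousWithinAt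
    obtain ⟨z, hzmem, hzle⟩ := maxPrinciple hA (isCompact_closure_Aset x₀ R₀ r) hfc hfA
      (subset_closure hy)
    obtain ⟨hzS, hzcase⟩ := frontier_cases x₀ R₀ r hzmem
    have hqz : q x₀ z = ‖z - x₀‖ ^ 2 := rfl
    have hfz : f z ≤ ε * r ^ 2 := by
      rcases hzcase with h | h
      · have hu : u z ≤ G := hbin z h
        have hwz : w z = -G + ε * R₀ ^ 2 := by
          simp only [hw, psi, hqz, h]
          linear_combination -hc
        rw [hf]
        have hsq : R₀ ^ 2 ≤ r ^ 2 := by nlinarith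
        have : ε * R₀ ^ 2 ≤ ε * r ^ 2 := mul_le_mul_of_nonneg_left hsq hε.le
        dsimp only
        rw [hwz]
        linarith
      · have hu : u z = 0 := hbout z h
        have hwz : w z = ε * r ^ 2 := by
          simp only [hw, psi, hqz, h]
          ring
        rw [hf]; dsimp only; rw [hu, hwz]; linarith
    -- unfold f y
    have hfy : f y = u y + (-c * (q x₀ y) ^ β + ε * q x₀ y + c * (r ^ 2) ^ β) := rfl
    have hq_le : q x₀ y ≤ r ^ 2 := by
      have := hy.2
      have h0 : (0:ℝ) ≤ ‖y - x₀‖ := norm_nonneg _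
      rw [q]
      nlinarith
    have hq_nonneg : 0 ≤ q x₀ y := sq_nonneg _
    have := le_trans hzle hfz
    rw [hfy] at this
    nlinarith
  -- let ε → 0
  by_contra hlt
  push_neg at hlt
  have hdpos : 0 < u y - c * ((q x₀ y) ^ β - (r ^ 2) ^ β) := sub_pos.2 hlt
  have hr2 : (0:ℝ) < r ^ 2 := by positivity
  have h3 := key ((u y - c * ((q x₀ y) ^ β - (r ^ 2) ^ β)) / (2 * r ^ 2))
    (div_pos hdpos (by positivity))
  have h4 : (u y - c * ((q x₀ y) ^ β - (r ^ 2) ^ β)) / (2 * r ^ 2) * r ^ 2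
      = (u y - c * ((q x₀ y) ^ β - (r ^ 2) ^ β)) / 2 := by
    field_simp
  rw [h4] at h3
  linarith
end annulus

/-- one-sided derivative comparison. -/
lemma deriv_le_within {f g : ℝ → ℝ} {f' g' δ : ℝ} (hδ : 0 < δ)
    (hf : HasDerivWithinAt f f' (Icc 0 δ) 0) (hg : HasDerivWithinAt g g' (Icc 0 δ) 0)
    (h0 : f 0 = g 0) (hle : ∀ t ∈ Icc 0 δ, f t ≤ g t) : f' ≤ g' := by
  have hd : HasDerivWithinAt (fun t => g t - f t) (g' - f') (Icc 0 δ) 0 := hg.sub hf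
  have hslope := hasDerivWithinAt_iff_tendsto_slope.1 hd
  rw [Icc_diff_left, nhdsWithin_Ioc_eq_nhdsGT hδ] at hslope
  have hev : ∀ᶠ t in 𝓝[>] (0:ℝ), 0 ≤ slope (fun t => g t - f t) 0 t := by
    filter_upwards [Ioc_mem_nhdsGT_of_mem (by exact ⟨le_rfl, hδ⟩ : (0:ℝ) ∈ Ico 0 δ)] with t ht
    rw [slope_def_field]
    have h1 : 0 ≤ g t - f t := sub_nonneg.2 (hle t ⟨ht.1.le, ht.2⟩)
    have h2 : g 0 - f 0 = 0 := by rw [h0]; ring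
    rw [h2, sub_zero]
    have : (0:ℝ) < t - 0 := by simpa using ht.1
    exact div_nonneg h1 this.le
  have := ge_of_tendsto hslope hev
  linarith

/-- directional bound at the outer boundary point. -/
lemma directional_bound (hN : 3 ≤ N) (x₀ : E N) {R₀ r G c : ℝ}
    (hR₀ : 0 < R₀) (hRr : R₀ < r) {u : E N → ℝ} {p : E N} {xb : E N}
    (hxb : ‖xb - x₀‖ = r)
    (hp : HasGradientWithinAt u p (Sset x₀ R₀ r) xb)
    (hu0 : ∀ x, R₀ ≤ ‖x - x₀‖ → ‖x - x₀‖ ≤ r → 0 ≤ u x)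
    (huz : u xb = 0)
    (hcomp : ∀ y ∈ Aset x₀ R₀ r,
      u y ≤ c * ((q x₀ y) ^ ((2 - (N:ℝ)) / 2) - (r ^ 2) ^ ((2 - (N:ℝ)) / 2)))
    {v : E N} (hv : ⟪xb - x₀, v⟫ < 0) :
    0 ≤ ⟪p, v⟫ ∧ ⟪p, v⟫ ≤ c * ((N:ℝ) - 2) * (r ^ 2) ^ ((2 - (N:ℝ)) / 2 - 1) * (-⟪xb - x₀, v⟫) := by
  set β : ℝ := (2 - (N:ℝ)) / 2 with hβ
  set m : ℝ := ⟪xb - x₀, v⟫ with hm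
  have hrpos : 0 < r := lt_trans hR₀ hRr
  have hv0 : v ≠ 0 := by
    intro h
    rw [hm, h] at hv
    simp at hv
  have hnv : 0 < ‖v‖ := norm_pos_iff.2 hv0
  set δ : ℝ := min ((-m) / ‖v‖ ^ 2) ((r ^ 2 - R₀ ^ 2) / (4 * (-m))) with hδdef
  have hmneg : m < 0 := hv
  have hrR : R₀ ^ 2 < r ^ 2 := by nlinarith
  have hδ : 0 < δ := by
    apply lt_min
    · apply div_pos (by linarith) (by positivity)
    · apply div_pos (by nlinarith) (by linarith)
  set γ : ℝ → E N := fun t => xb + t • v with hγdef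
  have hγ0 : γ 0 = xb := by simp [hγdef]
  set n : ℝ → ℝ := fun t => r ^ 2 + 2 * m * t + ‖v‖ ^ 2 * t ^ 2 with hndef
  have hγq : ∀ t, q x₀ (γ t) = n t := by
    intro t
    have h1 : γ t - x₀ = (xb - x₀) + t • v := by rw [hγdef]; module
    show ‖γ t - x₀‖ ^ 2 = r ^ 2 + 2 * m * t + ‖v‖ ^ 2 * t ^ 2
    rw [h1, norm_add_sq_real, real_inner_smul_right, norm_smul, hxb,
      Real.norm_eq_abs, mul_pow, sq_abs, ← hm]
    ring
  -- bounds on n on [0, δ]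
  have hn_ub : ∀ t ∈ Icc (0:ℝ) δ, n t ≤ r ^ 2 := by
    intro t ht
    have h1 : t ≤ (-m) / ‖v‖ ^ 2 := le_trans ht.2 (min_le_left _ _)
    have h2 : t * ‖v‖ ^ 2 ≤ -m := by
      rw [le_div_iff₀ (by positivity)] at h1
      linarith
    have e1 : t * (t * ‖v‖ ^ 2) ≤ t * (-m) := mul_le_mul_of_nonneg_left h2 ht.1
    have e2 : 0 ≤ t * (-m) := mul_nonneg ht.1 (by linarith)
    show r ^ 2 + 2 * m * t + ‖v‖ ^ 2 * t ^ 2 ≤ r ^ 2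
    nlinarith [e1, e2]
  have hn_ub' : ∀ t ∈ Ioc (0:ℝ) δ, n t < r ^ 2 := by
    intro t ht
    have h1 : t ≤ (-m) / ‖v‖ ^ 2 := le_trans ht.2 (min_le_left _ _)
    have h2 : t * ‖v‖ ^ 2 ≤ -m := by
      rw [le_div_iff₀ (by positivity)] at h1
      linarith
    have e1 : t * (t * ‖v‖ ^ 2) ≤ t * (-m) := mul_le_mul_of_nonneg_left h2 ht.1.le
    have e2 : 0 < t * (-m) := mul_pos ht.1 (by linarith)
    show r ^ 2 + 2 * m * t + ‖v‖ ^ 2 * t ^ 2 < r ^ 2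
    nlinarith [e1, e2]
  have hn_lb : ∀ t ∈ Icc (0:ℝ) δ, R₀ ^ 2 < n t := by
    intro t ht
    have h1 : t ≤ (r ^ 2 - R₀ ^ 2) / (4 * (-m)) := le_trans ht.2 (min_le_right _ _)
    have h2 : t * (4 * (-m)) ≤ r ^ 2 - R₀ ^ 2 := by
      rw [le_div_iff₀ (by linarith)] at h1
      linarith
    have e1 : 0 ≤ ‖v‖ ^ 2 * t ^ 2 := mul_nonneg (sq_nonneg _) (sq_nonneg _)
    show R₀ ^ 2 < r ^ 2 + 2 * m * t + ‖v‖ ^ 2 * t ^ 2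
    nlinarith [e1]
  have sq_le : ∀ a b : ℝ, 0 ≤ a → 0 ≤ b → a ^ 2 ≤ b ^ 2 → a ≤ b := by
    intro a b ha hb h; nlinarith
  have sq_lt : ∀ a b : ℝ, 0 ≤ a → 0 ≤ b → a ^ 2 < b ^ 2 → a < b := by
    intro a b ha hb h; nlinarith
  have hmaps : MapsTo γ (Icc 0 δ) (Sset x₀ R₀ r) := by
    intro t ht
    have h1 := hn_lb t ht
    have h2 := hn_ub t ht
    have h3 : ‖γ t - x₀‖ ^ 2 = n t := hγq t
    simp only [Sset, mem_setOf_eq]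
    have hnrm : (0:ℝ) ≤ ‖γ t - x₀‖ := norm_nonneg _
    constructor
    · exact sq_le R₀ ‖γ t - x₀‖ hR₀.le hnrm (by rw [h3]; linarith)
    · exact sq_le ‖γ t - x₀‖ r hnrm hrpos.le (by rw [h3]; linarith)
  have hmapsA : ∀ t ∈ Ioc (0:ℝ) δ, γ t ∈ Aset x₀ R₀ r := by
    intro t ht
    have h1 := hn_lb t ⟨ht.1.le, ht.2⟩
    have h2 := hn_ub' t ht
    have h3 : ‖γ t - x₀‖ ^ 2 = n t := hγq t
    simp only [Aset, mem_setOf_eq]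
    have hnrm : (0:ℝ) ≤ ‖γ t - x₀‖ := norm_nonneg _
    constructor
    · exact sq_lt R₀ ‖γ t - x₀‖ hR₀.le hnrm (by rw [h3]; linarith)
    · exact sq_lt ‖γ t - x₀‖ r hnrm hrpos.le (by rw [h3]; linarith)
  -- derivative of u ∘ γ
  have hγd : HasDerivWithinAt γ v (Icc 0 δ) 0 := by
    have : HasDerivAt γ v 0 := by
      have := ((hasDerivAt_id (0:ℝ)).smul_const v).const_add xb
      simpa [hγdef] using this
    exact this.hasDerivWithinAt
  have hcompderiv : HasDerivWithinAt (fun t => u (γ t)) (⟪p, v⟫) (Icc 0 δ) 0 := by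
    have hp' : HasFDerivWithinAt u ((InnerProductSpace.toDual ℝ (E N)) p) (Sset x₀ R₀ r) (γ 0) :=
      hγ0 ▸ hp.hasFDerivWithinAt
    have := hp'.comp_hasDerivWithinAt 0 hγd hmaps
    simpa [Function.comp_def, InnerProductSpace.toDual_apply_apply] using this
  have huγ0 : u (γ 0) = 0 := by rw [hγ0]; exact huz
  -- lower bound
  have hlow : (0:ℝ) ≤ ⟪p, v⟫ := by
    apply deriv_le_within hδ (hasDerivWithinAt_const 0 _ (0:ℝ)) hcompderiv
    · rw [huγ0]
    · intro t ht
      exact hu0 (γ t) (hmaps ht).1 (hmaps ht).2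
  -- upper bound
  set W : ℝ → ℝ := fun t => c * ((n t) ^ β - (r ^ 2) ^ β) with hW
  have hn0 : n 0 = r ^ 2 := by rw [hndef]; ring
  have hnd : HasDerivAt n (2 * m) 0 := by
    have h1 : HasDerivAt (fun t : ℝ => r ^ 2 + 2 * m * t + ‖v‖ ^ 2 * t ^ 2)
        (2 * m + ‖v‖ ^ 2 * (2 * 0 ^ 1)) 0 := by
      have hc1 : HasDerivAt (fun t : ℝ => 2 * m * t) (2 * m) 0 := by
        simpa using (hasDerivAt_id (0:ℝ)).const_mul (2 * m)
      have hc2 : HasDerivAt (fun t : ℝ => t ^ 2) (2 * 0 ^ 1) (0:ℝ) := by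
        simpa using hasDerivAt_pow 2 (0:ℝ)
      exact (hc1.const_add (r ^ 2)).add (hc2.const_mul (‖v‖ ^ 2))
    simpa using h1
  have hWd : HasDerivAt W (c * (β * (r ^ 2) ^ (β - 1) * (2 * m))) 0 := by
    have h1 : HasDerivAt (fun t : ℝ => t ^ β) (β * (r ^ 2) ^ (β - 1)) (r ^ 2) :=
      Real.hasDerivAt_rpow_const (Or.inl (by positivity))
    have h1' : HasDerivAt (fun t : ℝ => t ^ β) (β * (r ^ 2) ^ (β - 1)) (n 0) := by
      rw [hn0]; exact h1
    have h2 : HasDerivAt (fun t => (n t) ^ β) (β * (r ^ 2) ^ (β - 1) * (2 * m)) 0 := by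
      have := h1'.comp 0 hnd
      simpa [Function.comp_def] using this
    exact ((h2.sub_const ((r ^ 2) ^ β)).const_mul c)
  have hup : ⟪p, v⟫ ≤ c * (β * (r ^ 2) ^ (β - 1) * (2 * m)) := by
    apply deriv_le_within hδ hcompderiv hWd.hasDerivWithinAt
    · rw [huγ0, hW]; dsimp only; rw [hn0]; ring
    · intro t ht
      rcases eq_or_lt_of_le ht.1 with h | h
      · rw [← h, huγ0, hW]; dsimp only; rw [hn0]; simp
      · have := hcomp (γ t) (hmapsA t ⟨h, ht.2⟩)
        rw [hγq t] at this
        exact this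
  refine ⟨hlow, ?_⟩
  calc ⟪p, v⟫ ≤ c * (β * (r ^ 2) ^ (β - 1) * (2 * m)) := hup
    _ = c * ((N:ℝ) - 2) * (r ^ 2) ^ (β - 1) * (-m) := by rw [hβ]; ring

end HS

open HS in
theorem stmt0 (N : ℕ) (hN : 3 ≤ N) (x₀ : EuclideanSpace ℝ (Fin N))
    (R₀ G : ℝ) (hR₀ : 0 < R₀) (hG : 0 ≤ G) :
    ∃ r₀ > R₀, ∃ α > 0, ∀ r, r₀ ≤ r →
      ∀ u : EuclideanSpace ℝ (Fin N) → ℝ,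
        ContinuousOn u {x | R₀ ≤ ‖x - x₀‖ ∧ ‖x - x₀‖ ≤ r} →
        IsHarmonicOn u {x | R₀ < ‖x - x₀‖ ∧ ‖x - x₀‖ < r} →
        (∀ x, R₀ ≤ ‖x - x₀‖ → ‖x - x₀‖ ≤ r → 0 ≤ u x) →
        (∀ x, ‖x - x₀‖ = R₀ → u x ≤ G) →
        (∀ x, ‖x - x₀‖ = r → u x = 0) →
        ∀ x, ‖x - x₀‖ = r →
          ∀ p : EuclideanSpace ℝ (Fin N),
            HasGradientWithinAt u p {x | R₀ ≤ ‖x - x₀‖ ∧ ‖x - x₀‖ ≤ r} x →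
            ‖p‖ ^ 2 ≤ α * r ^ ((2 : ℤ) - 2 * (N : ℤ)) := by
  have hN3 : (3:ℝ) ≤ (N:ℝ) := by exact_mod_cast hN
  set β : ℝ := (2 - (N:ℝ)) / 2 with hβ
  have hβneg : β < 0 := by rw [hβ]; linarith
  refine ⟨2 * R₀, by linarith, ((N:ℝ) - 2) ^ 2 * (2 * (G + 1)) ^ 2 * R₀ ^ (2 * ((N:ℝ) - 2)),
    mul_pos (mul_pos (by nlinarith) (by positivity)) (Real.rpow_pos_of_pos hR₀ _), ?_⟩
  intro r hr u hcont hharm hu0 hbin hbout xb hxb p hp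
  have hRr : R₀ < r := by linarith
  have hrpos : 0 < r := lt_trans hR₀ hRr
  -- the barrier constant
  set K : ℝ := (R₀ ^ 2) ^ β - (r ^ 2) ^ β with hK
  have hhalf : (r ^ 2) ^ β ≤ (R₀ ^ 2) ^ β / 2 := by
    have h1 : (r ^ 2) ^ β ≤ ((2 * R₀) ^ 2) ^ β := by
      apply Real.rpow_le_rpow_of_nonpos (by positivity) (by nlinarith) hβneg.le
    have h2 : ((2 * R₀) ^ 2) ^ β = (4:ℝ) ^ β * (R₀ ^ 2) ^ β := by
      rw [show (2 * R₀) ^ 2 = 4 * R₀ ^ 2 by ring,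
        Real.mul_rpow (by norm_num) (by positivity)]
    have h3 : (4:ℝ) ^ β ≤ 1 / 2 := by
      have e1 : (4:ℝ) ^ β = (2:ℝ) ^ (2 * β) := by
        rw [show (2:ℝ) * β = ((2:ℕ):ℝ) * β by norm_num,
          Real.rpow_natCast_mul (by norm_num)]
        norm_num
      have e2 : (2:ℝ) ^ (2 * β) ≤ (2:ℝ) ^ (-1 : ℝ) := by
        apply Real.rpow_le_rpow_of_exponent_le (by norm_num)
        rw [hβ]; linarith
      rw [e1]
      calc (2:ℝ) ^ (2*β) ≤ (2:ℝ)^(-1:ℝ) := e2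
        _ = 1/2 := by rw [Real.rpow_neg_one]; norm_num
    have hR2β : (0:ℝ) < (R₀ ^ 2) ^ β := Real.rpow_pos_of_pos (by positivity) β
    calc (r ^ 2) ^ β ≤ ((2 * R₀) ^ 2) ^ β := h1
      _ = (4:ℝ) ^ β * (R₀ ^ 2) ^ β := h2
      _ ≤ (1/2) * (R₀ ^ 2) ^ β := by nlinarith
      _ = (R₀ ^ 2) ^ β / 2 := by ring
  have hR2β : (0:ℝ) < (R₀ ^ 2) ^ β := Real.rpow_pos_of_pos (by positivity) β
  have hKpos : 0 < K := by rw [hK]; linarith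
  set c : ℝ := G / K with hc
  have hcK : c * K = G := div_mul_cancel₀ G hKpos.ne'
  have hcpos : 0 ≤ c := div_nonneg hG hKpos.le
  have hcomp := comparison x₀ R₀ r hN hR₀ hRr hG hcont hharm hbin hbout hcK hcpos
  have huz : u xb = 0 := hbout xb hxb
  -- directional bounds
  have hdb := fun (v : EuclideanSpace ℝ (Fin N)) (hv : ⟪xb - x₀, v⟫ < 0) =>
    directional_bound hN x₀ (G := G) hR₀ hRr hxb hp hu0 huz hcomp hv
  set ν : EuclideanSpace ℝ (Fin N) := xb - x₀ with hν
  have hνν : ⟪ν, ν⟫ = r ^ 2 := by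
    rw [real_inner_self_eq_norm_sq, hν, hxb]
  have hνneg : ⟪ν, -ν⟫ < 0 := by
    rw [inner_neg_right, hνν]; nlinarith
  set Kd : ℝ := c * ((N:ℝ) - 2) * (r ^ 2) ^ (β - 1) with hKd
  have hKdpos : 0 ≤ Kd := by
    have := Real.rpow_pos_of_pos (show (0:ℝ) < r ^ 2 by positivity) (β - 1)
    rw [hKd]
    have h1 : (0:ℝ) ≤ (N:ℝ) - 2 := by linarith
    positivity
  -- radial bound
  obtain ⟨hrad1, hrad2⟩ := hdb (-ν) hνneg
  simp only [inner_neg_right, hνν, neg_neg] at hrad1 hrad2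
  have hrad2' : -⟪p, ν⟫ ≤ Kd * r ^ 2 := hrad2
  -- tangential component vanishes
  set τ : EuclideanSpace ℝ (Fin N) := p - (⟪p, ν⟫ / r ^ 2) • ν with hτ
  have hντ : ⟪ν, τ⟫ = 0 := by
    rw [hτ, inner_sub_right, real_inner_smul_right, hνν, real_inner_comm]
    field_simp
    simp
  have hptau : ⟪p, τ⟫ = 0 := by
    by_contra hne
    set b : ℝ := (Kd * r ^ 2 + 1 + ⟪p, ν⟫) / ⟪p, τ⟫ with hb
    have hr2pos : (0:ℝ) < r ^ 2 := by positivity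
    have hvb : ⟪ν, -ν + b • τ⟫ < 0 := by
      simp only [inner_add_right, inner_neg_right, real_inner_smul_right, hνν, hντ,
        mul_zero, add_zero, neg_neg]
      linarith
    obtain ⟨h1, h2⟩ := hdb (-ν + b • τ) hvb
    simp only [inner_add_right, inner_neg_right, real_inner_smul_right, hνν, hντ,
      mul_zero, add_zero, neg_neg] at h2
    have hb2 : b * ⟪p, τ⟫ = Kd * r ^ 2 + 1 + ⟪p, ν⟫ := div_mul_cancel₀ _ hne
    rw [hb2] at h2
    linarith
  -- conclude ‖p‖² = ⟪p,ν⟫²/r²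
  have hpν : ‖p‖ ^ 2 = ⟪p, ν⟫ ^ 2 / r ^ 2 := by
    have h1 : ⟪p, τ⟫ = ‖p‖ ^ 2 - ⟪p, ν⟫ ^ 2 / r ^ 2 := by
      rw [hτ, inner_sub_right, real_inner_smul_right, real_inner_self_eq_norm_sq]
      ring
    rw [h1] at hptau
    linarith
  have hsq : ⟪p, ν⟫ ^ 2 ≤ (Kd * r ^ 2) ^ 2 := by
    have := pow_le_pow_left₀ hrad1 hrad2' 2
    rwa [neg_sq] at this
  have hfinal : ‖p‖ ^ 2 ≤ Kd ^ 2 * r ^ 2 := by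
    rw [hpν]
    rw [div_le_iff₀ (by positivity)]
    have h9 : (Kd * r ^ 2) ^ 2 = Kd ^ 2 * r ^ 2 * r ^ 2 := by ring
    linarith [hsq]
  -- now the arithmetic with powers
  have hRN2 : (0:ℝ) < R₀ ^ ((N:ℝ) - 2) := Real.rpow_pos_of_pos hR₀ _
  have hc_le : c ≤ 2 * (G + 1) * R₀ ^ ((N:ℝ) - 2) := by
    have hKge : (R₀ ^ 2) ^ β / 2 ≤ K := by rw [hK]; linarith
    have h1 : c ≤ G / ((R₀ ^ 2) ^ β / 2) := by
      rw [hc]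
      exact div_le_div_of_nonneg_left hG (by positivity) hKge
    have h2 : ((R₀ ^ 2) ^ β)⁻¹ = R₀ ^ ((N:ℝ) - 2) := by
      rw [← Real.rpow_neg (by positivity), ← Real.rpow_natCast_mul hR₀.le 2]
      congr 1
      push_cast
      rw [hβ]; ring
    have h3 : G / ((R₀ ^ 2) ^ β / 2) = 2 * G * ((R₀ ^ 2) ^ β)⁻¹ := by
      field_simp
    rw [h3, h2] at h1
    nlinarith [h1, hRN2]
  have h1 : (r ^ 2) ^ (β - 1) = r ^ (2 * (β - 1)) := by
    rw [← Real.rpow_natCast r 2, ← Real.rpow_mul hrpos.le]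
    norm_num
  have h2 : (r ^ (2 * (β - 1))) ^ 2 * r ^ 2 = r ^ ((2:ℝ) - 2 * (N:ℝ)) := by
    rw [← Real.rpow_natCast (r ^ (2 * (β - 1))) 2, ← Real.rpow_mul hrpos.le,
      ← Real.rpow_natCast r 2, ← Real.rpow_add hrpos]
    congr 1
    push_cast
    rw [hβ]; ring
  have h4 : (R₀ ^ ((N:ℝ) - 2)) ^ 2 = R₀ ^ (2 * ((N:ℝ) - 2)) := by
    rw [← Real.rpow_natCast (R₀ ^ ((N:ℝ) - 2)) 2, ← Real.rpow_mul hR₀.le]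
    congr 1
    push_cast
    ring
  have hrneg : (0:ℝ) < r ^ ((2:ℝ) - 2 * (N:ℝ)) := Real.rpow_pos_of_pos hrpos _
  have hKd2 : Kd ^ 2 * r ^ 2 ≤
      ((N:ℝ) - 2) ^ 2 * (2 * (G + 1)) ^ 2 * R₀ ^ (2 * ((N:ℝ) - 2)) * r ^ ((2:ℝ) - 2 * (N:ℝ)) := by
    have hKdval : Kd = c * ((N:ℝ) - 2) * r ^ (2 * (β - 1)) := by rw [hKd, h1]
    have hrp : (0:ℝ) < r ^ (2 * (β - 1)) := Real.rpow_pos_of_pos hrpos _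
    have hN2 : (0:ℝ) ≤ (N:ℝ) - 2 := by linarith
    have step : Kd ^ 2 * r ^ 2 =
        c ^ 2 * ((N:ℝ) - 2) ^ 2 * ((r ^ (2 * (β - 1))) ^ 2 * r ^ 2) := by
      rw [hKdval]; ring
    rw [step, h2, ← h4]
    have hcsq : c ^ 2 ≤ (2 * (G + 1)) ^ 2 * (R₀ ^ ((N:ℝ) - 2)) ^ 2 := by
      have h8 := pow_le_pow_left₀ hcpos hc_le 2
      calc c ^ 2 ≤ (2 * (G + 1) * R₀ ^ ((N:ℝ) - 2)) ^ 2 := h8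
        _ = (2 * (G + 1)) ^ 2 * (R₀ ^ ((N:ℝ) - 2)) ^ 2 := by ring
    have hmul := mul_le_mul_of_nonneg_right
      (mul_le_mul_of_nonneg_right hcsq (sq_nonneg ((N:ℝ) - 2))) hrneg.le
    linarith [hmul]
  have hzpow : (r : ℝ) ^ ((2 : ℤ) - 2 * (N : ℤ)) = r ^ ((2:ℝ) - 2 * (N:ℝ)) := by
    rw [← Real.rpow_intCast r ((2 : ℤ) - 2 * (N : ℤ))]
    congr 1
    push_cast
    ring
  rw [hzpow]
  calc ‖p‖ ^ 2 ≤ Kd ^ 2 * r ^ 2 := hfinal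
    _ ≤ _ := hKd2
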